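/- Let A be a Hermitian operator with spectral radius 1, second eigenvalue modulus λ < 1, and U unitary with ‖P_max U v‖ ≤ d‖v‖ on the top eigenspace, 0 ≤ d < 1. Then the spectral radius of UA is at most √(g(λ,d)) < 1, where g(λ,d) is the constant of the two-step contraction estimate. -/

import Mathlib

set_option maxHeartbeats 2000000

/-- Under the two-step contraction hypotheses (`A` Hermitian with spectral
radius 1, top eigenspace `V`, rest of spectrum of modulus `≤ λ < 1`, `U`
unitary with `‖P_max U v‖ ≤ d‖v‖` on `V`, `0 ≤ d < 1`), the spectral radius of
`UA` is at most `√g < 1`, where `g` is the two-step contraction constant. -/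
theorem stmt_12 {E : Type*} [NormedAddCommGroup E] [InnerProductSpace ℂ E]
    [FiniteDimensional ℂ E]
    (A : E →L[ℂ] E) (hA : IsSelfAdjoint A)
    (hrad : spectralRadius ℂ A = 1)
    (V : Submodule ℂ E)
    (hVinv : ∀ x ∈ V, A x ∈ V) (hViso : ∀ x ∈ V, ‖A x‖ = ‖x‖)
    (lam : ℝ) (hlam0 : 0 ≤ lam) (hlam1 : lam < 1)
    (hperp : ∀ y ∈ Vᗮ, A y ∈ Vᗮ ∧ ‖A y‖ ≤ lam * ‖y‖)
    (U : E →L[ℂ] E) (hU : U ∈ unitary (E →L[ℂ] E))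
    (d : ℝ) (hd0 : 0 ≤ d) (hd1 : d < 1)
    (hcontr : ∀ v ∈ V, ‖(Submodule.orthogonalProjectionOnto V (U v) : E)‖ ≤ d * ‖v‖) :
    ∃ g : ℝ, 0 ≤ g ∧ g < 1 ∧
      (∀ v : E, ‖((U * A) ^ 2) v‖ ≤ g * ‖v‖) ∧
      Real.sqrt g < 1 ∧
      spectralRadius ℂ (U * A) ≤ ENNReal.ofReal (Real.sqrt g) := by
  have hl2 : lam ^ 2 < 1 := by nlinarith
  have hl2' : 0 ≤ lam ^ 2 := sq_nonneg lam
  have h1lam : 0 < 1 - lam ^ 2 := by linarith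
  -- the squared contraction constant
  set gsq : ℝ := max (1 - (1 - lam ^ 2) * ((1 - d) / 2) ^ 2)
      (lam ^ 2 + (1 - lam ^ 2) * ((1 + d) / 2) ^ 2) with hgsq
  have hgsq0 : 0 ≤ gsq :=
    le_max_of_le_right (by positivity)
  have hgsq1 : gsq < 1 := by
    apply max_lt
    · have h2 : (0:ℝ) < ((1 - d) / 2) ^ 2 := by nlinarith
      nlinarith [mul_pos h1lam h2]
    · have h3 : ((1 + d) / 2) ^ 2 < 1 := by nlinarith
      nlinarith [mul_pos h1lam (by linarith : (0:ℝ) < 1 - ((1 + d) / 2) ^ 2)]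
  have hUiso : ∀ y : E, ‖U y‖ = ‖y‖ := fun y =>
    ContinuousLinearMap.norm_map_of_mem_unitary hU y
  -- Pythagoras helper
  have pyth : ∀ v w : E, v ∈ V → w ∈ Vᗮ → ‖v + w‖ ^ 2 = ‖v‖ ^ 2 + ‖w‖ ^ 2 := by
    intro v w hv hw
    rw [pow_two, pow_two, pow_two]
    exact norm_add_sq_eq_norm_sq_add_norm_sq_of_inner_eq_zero v w
      (Submodule.inner_right_of_mem_orthogonal hv hw)
  -- projection norm bound
  have projle : ∀ z : E, ‖(Submodule.orthogonalProjectionOnto V z : E)‖ ≤ ‖z‖ := by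
    intro z
    calc ‖(Submodule.orthogonalProjectionOnto V z : E)‖ = ‖Submodule.orthogonalProjectionOnto V z‖ := rfl
      _ ≤ ‖Submodule.orthogonalProjectionOnto V‖ * ‖z‖ := (Submodule.orthogonalProjectionOnto V).le_opNorm z
      _ ≤ 1 * ‖z‖ :=
          mul_le_mul_of_nonneg_right (Submodule.orthogonalProjectionOnto_norm_le V) (norm_nonneg z)
      _ = ‖z‖ := one_mul ‖z‖
  -- key two-step estimate
  have key : ∀ x : E, ‖A (U (A x))‖ ^ 2 ≤ gsq * ‖x‖ ^ 2 := by
    intro x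
    set v : E := (Submodule.orthogonalProjectionOnto V x : E) with hvdef
    have hv : v ∈ V := (Submodule.orthogonalProjectionOnto V x).2
    set w : E := x - v with hwdef
    have hw : w ∈ Vᗮ := Submodule.sub_starProjection_mem_orthogonal (K := V) x
    have hx : x = v + w := by rw [hwdef]; abel
    have hxsq : ‖x‖ ^ 2 = ‖v‖ ^ 2 + ‖w‖ ^ 2 := by
      conv_lhs => rw [hx]
      exact pyth v w hv hw
    have hAv : A v ∈ V := hVinv v hv
    have hAvn : ‖A v‖ = ‖v‖ := hViso v hv
    have hAw : A w ∈ Vᗮ := (hperp w hw).1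
    have hAwn : ‖A w‖ ≤ lam * ‖w‖ := (hperp w hw).2
    have hAx : A x = A v + A w := by conv_lhs => rw [hx, map_add]
    have hAxsq : ‖A x‖ ^ 2 = ‖v‖ ^ 2 + ‖A w‖ ^ 2 := by
      rw [hAx, pyth _ _ hAv hAw, hAvn]
    set y : E := U (A x) with hydef
    have hyn : ‖y‖ = ‖A x‖ := hUiso (A x)
    set p : E := (Submodule.orthogonalProjectionOnto V y : E) with hpdef
    have hpV : p ∈ V := (Submodule.orthogonalProjectionOnto V y).2
    set q : E := y - p with hqdef
    have hqV : q ∈ Vᗮ := Submodule.sub_starProjection_mem_orthogonal (K := V) y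
    have hy : y = p + q := by rw [hqdef]; abel
    have hysq : ‖y‖ ^ 2 = ‖p‖ ^ 2 + ‖q‖ ^ 2 := by
      conv_lhs => rw [hy]
      exact pyth p q hpV hqV
    have hAp : A p ∈ V := hVinv p hpV
    have hApn : ‖A p‖ = ‖p‖ := hViso p hpV
    have hAq : A q ∈ Vᗮ := (hperp q hqV).1
    have hAqn : ‖A q‖ ≤ lam * ‖q‖ := (hperp q hqV).2
    have hAy : A y = A p + A q := by conv_lhs => rw [hy, map_add]
    have hAysq : ‖A y‖ ^ 2 = ‖p‖ ^ 2 + ‖A q‖ ^ 2 := by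
      rw [hAy, pyth _ _ hAp hAq, hApn]
    -- bound on ‖p‖
    have hpbd : ‖p‖ ≤ d * ‖v‖ + lam * ‖w‖ := by
      have hy2 : y = U (A v) + U (A w) := by rw [hydef, hAx, map_add]
      have hp2 : p = (Submodule.orthogonalProjectionOnto V (U (A v)) : E)
          + (Submodule.orthogonalProjectionOnto V (U (A w)) : E) := by
        rw [hpdef, hy2, map_add]; rfl
      have h1 : ‖(Submodule.orthogonalProjectionOnto V (U (A v)) : E)‖ ≤ d * ‖v‖ := by
        have := hcontr (A v) hAv
        rwa [hAvn] at this
      have h2 : ‖(Submodule.orthogonalProjectionOnto V (U (A w)) : E)‖ ≤ lam * ‖w‖ := by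
        calc ‖(Submodule.orthogonalProjectionOnto V (U (A w)) : E)‖ ≤ ‖U (A w)‖ := projle _
          _ = ‖A w‖ := hUiso _
          _ ≤ lam * ‖w‖ := hAwn
      calc ‖p‖ ≤ ‖(Submodule.orthogonalProjectionOnto V (U (A v)) : E)‖
            + ‖(Submodule.orthogonalProjectionOnto V (U (A w)) : E)‖ := by
            rw [hp2]; exact norm_add_le _ _
        _ ≤ d * ‖v‖ + lam * ‖w‖ := add_le_add h1 h2
    clear_value v w y p q
    have hAq2 : ‖A q‖ ^ 2 ≤ lam ^ 2 * ‖q‖ ^ 2 := by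
      have h0 : 0 ≤ lam * ‖q‖ := mul_nonneg hlam0 (norm_nonneg q)
      have := mul_le_mul hAqn hAqn (norm_nonneg (A q)) h0
      nlinarith [this]
    have hAw2 : ‖A w‖ ^ 2 ≤ lam ^ 2 * ‖w‖ ^ 2 := by
      have h0 : 0 ≤ lam * ‖w‖ := mul_nonneg hlam0 (norm_nonneg w)
      have := mul_le_mul hAwn hAwn (norm_nonneg (A w)) h0
      nlinarith [this]
    -- ‖y‖² ≤ ‖v‖² + lam²‖w‖²
    have hy2bd : ‖p‖ ^ 2 + ‖q‖ ^ 2 ≤ ‖v‖ ^ 2 + lam ^ 2 * ‖w‖ ^ 2 := by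
      rw [← hysq, hyn, hAxsq]; linarith
    by_cases hcase : (1 - d) / 2 * ‖x‖ ≤ ‖w‖
    · -- far from V: one-step contraction already good
      have h0 : 0 ≤ (1 - d) / 2 * ‖x‖ := mul_nonneg (by linarith) (norm_nonneg x)
      have hwx : ((1 - d) / 2) ^ 2 * ‖x‖ ^ 2 ≤ ‖w‖ ^ 2 := by
        have := mul_le_mul hcase hcase h0 (norm_nonneg w)
        nlinarith [this]
      have hle : 1 - (1 - lam ^ 2) * ((1 - d) / 2) ^ 2 ≤ gsq := le_max_left _ _
      have hAyq : ‖A y‖ ^ 2 ≤ ‖p‖ ^ 2 + ‖q‖ ^ 2 := by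
        rw [hAysq]
        nlinarith [hAq2, sq_nonneg ‖q‖]
      have e1 : (1 - lam ^ 2) * (((1 - d) / 2) ^ 2 * ‖x‖ ^ 2) ≤ (1 - lam ^ 2) * ‖w‖ ^ 2 :=
        mul_le_mul_of_nonneg_left hwx (le_of_lt h1lam)
      have e2 : (1 - (1 - lam ^ 2) * ((1 - d) / 2) ^ 2) * ‖x‖ ^ 2 ≤ gsq * ‖x‖ ^ 2 :=
        mul_le_mul_of_nonneg_right hle (sq_nonneg _)
      calc ‖A y‖ ^ 2 ≤ ‖p‖ ^ 2 + ‖q‖ ^ 2 := hAyq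
        _ ≤ ‖v‖ ^ 2 + lam ^ 2 * ‖w‖ ^ 2 := hy2bd
        _ ≤ gsq * ‖x‖ ^ 2 := by nlinarith [e1, e2, hxsq]
    · -- close to V: use the contraction of U on V
      push_neg at hcase
      have hvx : ‖v‖ ≤ ‖x‖ := by
        nlinarith [norm_nonneg v, norm_nonneg x, sq_nonneg ‖w‖, hxsq]
      have hpcx : ‖p‖ ≤ (1 + d) / 2 * ‖x‖ := by
        have h1 : d * ‖v‖ ≤ d * ‖x‖ := mul_le_mul_of_nonneg_left hvx hd0
        have h2 : lam * ‖w‖ ≤ (1 - d) / 2 * ‖x‖ := by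
          have : lam * ‖w‖ ≤ 1 * ‖w‖ :=
            mul_le_mul_of_nonneg_right (le_of_lt hlam1) (norm_nonneg w)
          nlinarith [norm_nonneg w]
        calc ‖p‖ ≤ d * ‖v‖ + lam * ‖w‖ := hpbd
          _ ≤ d * ‖x‖ + (1 - d) / 2 * ‖x‖ := add_le_add h1 h2
          _ = (1 + d) / 2 * ‖x‖ := by ring
      have hp2x : ‖p‖ ^ 2 ≤ ((1 + d) / 2) ^ 2 * ‖x‖ ^ 2 := by
        have := mul_le_mul hpcx hpcx (norm_nonneg p) (by positivity)
        nlinarith [this]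
      have hyx : ‖p‖ ^ 2 + ‖q‖ ^ 2 ≤ ‖x‖ ^ 2 := by
        have : lam ^ 2 * ‖w‖ ^ 2 ≤ 1 * ‖w‖ ^ 2 :=
          mul_le_mul_of_nonneg_right (le_of_lt hl2) (sq_nonneg _)
        linarith [hy2bd, hxsq]
      have hle : lam ^ 2 + (1 - lam ^ 2) * ((1 + d) / 2) ^ 2 ≤ gsq := le_max_right _ _
      have h1 : ‖A y‖ ^ 2 ≤ ‖p‖ ^ 2 + lam ^ 2 * ‖q‖ ^ 2 := by rw [hAysq]; linarith
      have e2 : (lam ^ 2 + (1 - lam ^ 2) * ((1 + d) / 2) ^ 2) * ‖x‖ ^ 2 ≤ gsq * ‖x‖ ^ 2 :=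
        mul_le_mul_of_nonneg_right hle (sq_nonneg _)
      calc ‖A y‖ ^ 2 ≤ ‖p‖ ^ 2 + lam ^ 2 * ‖q‖ ^ 2 := h1
        _ = lam ^ 2 * (‖p‖ ^ 2 + ‖q‖ ^ 2) + (1 - lam ^ 2) * ‖p‖ ^ 2 := by ring
        _ ≤ lam ^ 2 * ‖x‖ ^ 2 + (1 - lam ^ 2) * (((1 + d) / 2) ^ 2 * ‖x‖ ^ 2) :=
            add_le_add (mul_le_mul_of_nonneg_left hyx hl2')
              (mul_le_mul_of_nonneg_left hp2x (le_of_lt h1lam))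
        _ ≤ gsq * ‖x‖ ^ 2 := by nlinarith [e2]
  -- pointwise bound for (U*A)^2
  have key2 : ∀ x : E, ‖((U * A) ^ 2) x‖ ≤ Real.sqrt gsq * ‖x‖ := by
    intro x
    have happ : ((U * A) ^ 2) x = U (A (U (A x))) := by rw [sq]; rfl
    rw [happ, hUiso]
    have h1 : ‖A (U (A x))‖ = Real.sqrt (‖A (U (A x))‖ ^ 2) :=
      (Real.sqrt_sq (norm_nonneg _)).symm
    rw [h1]
    calc Real.sqrt (‖A (U (A x))‖ ^ 2) ≤ Real.sqrt (gsq * ‖x‖ ^ 2) :=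
          Real.sqrt_le_sqrt (key x)
      _ = Real.sqrt gsq * ‖x‖ := by
          rw [Real.sqrt_mul hgsq0, Real.sqrt_sq (norm_nonneg x)]
  have hsg1 : Real.sqrt gsq < 1 := by
    calc Real.sqrt gsq < Real.sqrt 1 := Real.sqrt_lt_sqrt hgsq0 hgsq1
      _ = 1 := Real.sqrt_one
  refine ⟨Real.sqrt gsq, Real.sqrt_nonneg _, hsg1, key2, ?_, ?_⟩
  · calc Real.sqrt (Real.sqrt gsq) < Real.sqrt 1 :=
        Real.sqrt_lt_sqrt (Real.sqrt_nonneg _) hsg1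
      _ = 1 := Real.sqrt_one
  · -- spectral radius bound via Gelfand-type estimate with n = 1
    have hnorm : ‖(U * A) ^ 2‖ ≤ Real.sqrt gsq :=
      ContinuousLinearMap.opNorm_le_bound _ (Real.sqrt_nonneg _) key2
    have h1le : ((‖(1 : E →L[ℂ] E)‖₊ : NNReal) : ENNReal) ≤ 1 := by
      rw [ENNReal.coe_le_one_iff, ← NNReal.coe_le_coe]
      exact ContinuousLinearMap.norm_id_le
    have hMle : ((‖(U * A) ^ (1 + 1)‖₊ : NNReal) : ENNReal)
        ≤ ENNReal.ofReal (Real.sqrt gsq) := by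
      rw [← enorm_eq_nnnorm, ← ofReal_norm]
      exact ENNReal.ofReal_le_ofReal hnorm
    refine le_trans (spectrum.spectralRadius_le_pow_nnnorm_pow_one_div ℂ (U * A) 1) ?_
    simp only [Nat.cast_one]
    calc ((‖(U * A) ^ (1 + 1)‖₊ : NNReal) : ENNReal) ^ (1 / (1 + 1) : ℝ) *
          ((‖(1 : E →L[ℂ] E)‖₊ : NNReal) : ENNReal) ^ (1 / (1 + 1) : ℝ)
        ≤ (ENNReal.ofReal (Real.sqrt gsq)) ^ (1 / (1 + 1) : ℝ) *
          (1 : ENNReal) ^ (1 / (1 + 1) : ℝ) :=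
          mul_le_mul' (ENNReal.rpow_le_rpow hMle (by positivity))
            (ENNReal.rpow_le_rpow h1le (by positivity))
      _ = (ENNReal.ofReal (Real.sqrt gsq)) ^ (1 / (1 + 1) : ℝ) := by
          rw [ENNReal.one_rpow, mul_one]
      _ = ENNReal.ofReal (Real.sqrt gsq ^ (1 / (1 + 1) : ℝ)) :=
          ENNReal.ofReal_rpow_of_nonneg (Real.sqrt_nonneg _) (by positivity)
      _ = ENNReal.ofReal (Real.sqrt (Real.sqrt gsq)) := by
          congr 1
          rw [Real.sqrt_eq_rpow (Real.sqrt gsq)]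
          norm_num
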